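/- The sesquilinear form ⟨·,·⟩_K : V × V → K_{1/2}, defined by ⟨p,q⟩_K := Σ_{m∈ℤ/2} ε^m Σ_{j+k+ℓ=m} ∫_{ℝ^d} p̄_j(y) q_k(y) ω_ℓ(y) e^{−Σ_ν λ_ν y_ν²} dy, is non-degenerate: if ⟨p,q⟩_K = 0 for all p ∈ V, then q = 0. -/

import Mathlib

open MeasureTheory
open scoped Topology BigOperators
noncomputable section

/-- evaluation of a complex polynomial at a real point -/
def evalP {d : ℕ} (p : MvPolynomial (Fin d) ℂ) (y : EuclideanSpace ℝ (Fin d)) : ℂ :=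
  MvPolynomial.eval (fun i => (y i : ℂ)) p

/-- evaluation of a real polynomial at a real point -/
def evalR {d : ℕ} (p : MvPolynomial (Fin d) ℝ) (y : EuclideanSpace ℝ (Fin d)) : ℝ :=
  MvPolynomial.eval (fun i => y i) p

/-- An element of the space `V` of formal series `∑_{j ∈ ℤ/2} p_j ε^j` (`p_j ∈ ℂ[y]`) is
represented by its coefficient function `ℤ → ℂ[y]` (the index `n` standing for the
exponent `n/2`); membership in `V` requires finitely many negative powers. -/
def LowerFinite {α : Type*} [Zero α] (p : ℤ → α) : Prop :=
  ∃ N : ℤ, ∀ n < N, p n = 0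

/-- the coefficient of `ε^{m/2}` in the `K_{1/2}`-valued sesquilinear form
`⟨p,q⟩_K = ∑_m ε^m ∑_{j+k+ℓ=m} ∫ p̄_j q_k ω_ℓ e^{-∑ λ_ν y_ν²} dy`. -/
def formCoeff {d : ℕ} (lam : Fin d → ℝ) (ω : ℕ → MvPolynomial (Fin d) ℝ)
    (p q : ℤ → MvPolynomial (Fin d) ℂ) (m : ℤ) : ℂ :=
  ∑ᶠ j : ℤ, ∑ᶠ k : ℤ,
    if 0 ≤ m - j - k then
      ∫ y : EuclideanSpace ℝ (Fin d),
        (starRingEnd ℂ) (evalP (p j) y) * evalP (q k) y *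
          ((evalR (ω (m - j - k).toNat) y : ℝ) : ℂ) *
          ((Real.exp (-∑ ν, lam ν * (y ν)^2) : ℝ) : ℂ)
    else 0


/-- 1-d: monomial times Gaussian is integrable. -/
private lemma aux_pow_mul_gauss_integrable (n : ℕ) {b : ℝ} (hb : 0 < b) :
    Integrable (fun x : ℝ => x ^ n * Real.exp (-b * x ^ 2)) := by
  have := integrable_rpow_mul_exp_neg_mul_sq hb (s := (n : ℝ))
    (lt_of_lt_of_le neg_one_lt_zero (Nat.cast_nonneg n))
  simpa [Real.rpow_natCast] using this

/-- multi-d: monomial times Gaussian is integrable on the pi space. -/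
private lemma aux_monomial_gauss_integrable {d : ℕ} (lam : Fin d → ℝ) (hlam : ∀ ν, 0 < lam ν)
    (m : Fin d → ℕ) :
    Integrable (fun x : Fin d → ℝ =>
      (∏ i, (x i) ^ (m i)) * Real.exp (-∑ i, lam i * (x i) ^ 2)) := by
  have h : ∀ x : Fin d → ℝ,
      (∏ i, ((x i) ^ (m i) * Real.exp (-(lam i) * (x i) ^ 2)))
        = (∏ i, (x i) ^ (m i)) * Real.exp (-∑ i, lam i * (x i) ^ 2) := by
    intro x
    rw [Finset.prod_mul_distrib, ← Real.exp_sum]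
    congr 2
    simp [neg_mul]
  exact (Integrable.fintype_prod
    (f := fun i (t : ℝ) => t ^ (m i) * Real.exp (-(lam i) * t ^ 2))
    (fun i => aux_pow_mul_gauss_integrable (m i) (hlam i))).congr
    (Filter.Eventually.of_forall h)

/-- multi-d: complex polynomial times Gaussian is integrable on the pi space. -/
private lemma aux_poly_gauss_integrable_pi {d : ℕ} (lam : Fin d → ℝ) (hlam : ∀ ν, 0 < lam ν)
    (P : MvPolynomial (Fin d) ℂ) :
    Integrable (fun x : Fin d → ℝ =>
      MvPolynomial.eval (fun i => ((x i : ℝ) : ℂ)) P *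
        ((Real.exp (-∑ i, lam i * (x i) ^ 2) : ℝ) : ℂ)) := by
  have h : ∀ x : Fin d → ℝ,
      (∑ m ∈ P.support, P.coeff m *
          ((((∏ i, (x i) ^ (m i)) * Real.exp (-∑ i, lam i * (x i) ^ 2)) : ℝ) : ℂ))
        = MvPolynomial.eval (fun i => ((x i : ℝ) : ℂ)) P *
            ((Real.exp (-∑ i, lam i * (x i) ^ 2) : ℝ) : ℂ) := by
    intro x
    rw [MvPolynomial.eval_eq', Finset.sum_mul]
    refine Finset.sum_congr rfl fun m _ => ?_
    push_cast
    ring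
  refine (integrable_finset_sum _ fun m _ => ?_).congr (Filter.Eventually.of_forall h)
  exact ((aux_monomial_gauss_integrable lam hlam m).ofReal.const_mul _)

/-- transfer to `EuclideanSpace`. -/
private lemma aux_poly_gauss_integrable {d : ℕ} (lam : Fin d → ℝ) (hlam : ∀ ν, 0 < lam ν)
    (P : MvPolynomial (Fin d) ℂ) :
    Integrable (fun y : EuclideanSpace ℝ (Fin d) =>
      evalP P y * ((Real.exp (-∑ ν, lam ν * (y ν) ^ 2) : ℝ) : ℂ)) :=
  ((EuclideanSpace.volume_preserving_symm_measurableEquiv_toLp (Fin d)).integrable_comp_emb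
    (MeasurableEquiv.toLp 2 (Fin d → ℝ)).symm.measurableEmbedding).2
    (aux_poly_gauss_integrable_pi lam hlam P)

/-- conjugation and evaluation at real points. -/
private lemma aux_conj_eval {d : ℕ} (P : MvPolynomial (Fin d) ℂ) (x : Fin d → ℝ) :
    (starRingEnd ℂ) (MvPolynomial.eval (fun i => ((x i : ℝ) : ℂ)) P)
      = MvPolynomial.eval (fun i => ((x i : ℝ) : ℂ)) (MvPolynomial.map (starRingEnd ℂ) P) := by
  induction P using MvPolynomial.induction_on with
  | C a => simp
  | add p q hp hq => simp [hp, hq]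
  | mul_X p i hp => simp [hp, Complex.conj_ofReal]

/-- a complex polynomial vanishing at all real points is zero. -/
private lemma aux_vanish_real {d : ℕ} (P : MvPolynomial (Fin d) ℂ)
    (h : ∀ x : Fin d → ℝ, MvPolynomial.eval (fun i => ((x i : ℝ) : ℂ)) P = 0) : P = 0 := by
  set Pre : MvPolynomial (Fin d) ℝ :=
    ∑ m ∈ P.support, MvPolynomial.monomial m ((P.coeff m).re) with hPre
  set Pim : MvPolynomial (Fin d) ℝ :=
    ∑ m ∈ P.support, MvPolynomial.monomial m ((P.coeff m).im) with hPim
  have hcre : ∀ m, Pre.coeff m = (P.coeff m).re := by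
    intro m
    rw [hPre, MvPolynomial.coeff_sum]
    simp only [MvPolynomial.coeff_monomial]
    rw [Finset.sum_ite_eq' P.support m (fun k => (P.coeff k).re)]
    by_cases hm : m ∈ P.support
    · rw [if_pos hm]
    · rw [if_neg hm]
      rw [MvPolynomial.notMem_support_iff.mp hm]
      simp
  have hcim : ∀ m, Pim.coeff m = (P.coeff m).im := by
    intro m
    rw [hPim, MvPolynomial.coeff_sum]
    simp only [MvPolynomial.coeff_monomial]
    rw [Finset.sum_ite_eq' P.support m (fun k => (P.coeff k).im)]
    by_cases hm : m ∈ P.support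
    · rw [if_pos hm]
    · rw [if_neg hm]
      rw [MvPolynomial.notMem_support_iff.mp hm]
      simp
  have hevalre : ∀ x : Fin d → ℝ, MvPolynomial.eval x Pre
      = ∑ m ∈ P.support, (P.coeff m).re * ∏ i ∈ m.support, x i ^ m i := by
    intro x
    rw [hPre, map_sum]
    refine Finset.sum_congr rfl fun m _ => ?_
    rw [MvPolynomial.eval_monomial]
    rfl
  have hevalim : ∀ x : Fin d → ℝ, MvPolynomial.eval x Pim
      = ∑ m ∈ P.support, (P.coeff m).im * ∏ i ∈ m.support, x i ^ m i := by
    intro x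
    rw [hPim, map_sum]
    refine Finset.sum_congr rfl fun m _ => ?_
    rw [MvPolynomial.eval_monomial]
    rfl
  have hdecomp : ∀ x : Fin d → ℝ,
      MvPolynomial.eval (fun i => ((x i : ℝ) : ℂ)) P
        = ((MvPolynomial.eval x Pre : ℝ) : ℂ)
          + Complex.I * ((MvPolynomial.eval x Pim : ℝ) : ℂ) := by
    intro x
    rw [MvPolynomial.eval_eq, hevalre, hevalim]
    push_cast
    rw [Finset.mul_sum, ← Finset.sum_add_distrib]
    refine Finset.sum_congr rfl fun m _ => ?_
    conv_lhs => rw [← Complex.re_add_im (P.coeff m)]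
    ring
  have hre : ∀ x : Fin d → ℝ, MvPolynomial.eval x Pre = 0 := by
    intro x
    have := h x
    rw [hdecomp x] at this
    have h2 := congrArg Complex.re this
    simpa using h2
  have him : ∀ x : Fin d → ℝ, MvPolynomial.eval x Pim = 0 := by
    intro x
    have := h x
    rw [hdecomp x] at this
    have h2 := congrArg Complex.im this
    simpa using h2
  have hre0 : Pre = 0 := MvPolynomial.funext (fun x => by rw [hre x, map_zero])
  have him0 : Pim = 0 := MvPolynomial.funext (fun x => by rw [him x, map_zero])
  ext m
  have h1 : (P.coeff m).re = 0 := by rw [← hcre m, hre0]; simp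
  have h2 : (P.coeff m).im = 0 := by rw [← hcim m, him0]; simp
  simp [Complex.ext_iff, h1, h2]

private lemma aux_continuous_evalP {d : ℕ} (P : MvPolynomial (Fin d) ℂ) :
    Continuous fun y : EuclideanSpace ℝ (Fin d) => evalP P y := by
  have : Continuous fun y : EuclideanSpace ℝ (Fin d) => (fun i => ((y i : ℝ) : ℂ)) :=
    continuous_pi fun i =>
      Complex.continuous_ofReal.comp ((EuclideanSpace.proj i).continuous)
  exact (MvPolynomial.continuous_eval P).comp this

/-- **Lemma 3.5** (Klein–Rosenberger): the sesquilinear form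
`⟨·,·⟩_K : V × V → K_{1/2}` is non-degenerate: if `⟨p, q⟩_K = 0` for all `p ∈ V`,
then `q = 0`.  Here `ω₀ = 1` and
`ω_j = ∑_{ℓ=1}^{2j} ∑_{k₁+⋯+k_ℓ = j, k_i ∈ ℕ*/2} ((-2)^ℓ/ℓ!) φ_{2k₁} ⋯ φ_{2k_ℓ}`
(encoded with `n = 2j`, so `ω_j = ω n` and `φ_{2k_i} = φpoly n_i` with `n_i = 2k_i ≥ 1`,
`n₁ + ⋯ + n_ℓ = n`), where the `φ_k` are the homogeneous Taylor polynomials of degree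
`k+2` of the eikonal phase `φ`. -/
theorem lemma_3_5_nondegenerate (d : ℕ) (hd : 0 < d)
    (lam : Fin d → ℝ) (hlam : ∀ ν, 0 < lam ν)
    (φpoly : ℕ → MvPolynomial (Fin d) ℝ)
    (hφpoly : ∀ n, 1 ≤ n → (φpoly n).IsHomogeneous (n + 2))
    (ω : ℕ → MvPolynomial (Fin d) ℝ)
    (hω0 : ω 0 = 1)
    (hω : ∀ n, 1 ≤ n → ω n =
      ∑ ℓ ∈ Finset.Icc 1 n, ((-2 : ℝ)^ℓ / (Nat.factorial ℓ)) •
        ∑ t ∈ (Finset.Nat.antidiagonalTuple ℓ n).filter (fun t => ∀ i, 1 ≤ t i),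
          ∏ i, φpoly (t i))
    (q : ℤ → MvPolynomial (Fin d) ℂ) (hq : LowerFinite q)
    (h : ∀ p : ℤ → MvPolynomial (Fin d) ℂ, LowerFinite p →
      ∀ m : ℤ, formCoeff lam ω p q m = 0) :
    ∀ n, q n = 0 := by
  intro n
  by_contra hqn
  obtain ⟨N, hN⟩ := hq
  obtain ⟨n₀, hn₀, hmin⟩ := Int.exists_least_of_bdd
    (P := fun z => q z ≠ 0)
    ⟨N, fun z hz => by by_contra hc; exact hz (hN z (lt_of_not_ge hc))⟩
    ⟨n, hqn⟩
  set Q : MvPolynomial (Fin d) ℂ := q n₀ with hQdef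
  -- the key integral identity coming from testing against p = Q·δ_{j=0}
  have keyInt : (∫ y : EuclideanSpace ℝ (Fin d),
      (starRingEnd ℂ) (evalP Q y) * evalP (q n₀) y *
        ((evalR (ω 0) y : ℝ) : ℂ) *
        ((Real.exp (-∑ ν, lam ν * (y ν)^2) : ℝ) : ℂ)) = 0 := by
    have hplf : LowerFinite (fun j : ℤ => if j = 0 then Q else 0) :=
      ⟨0, fun k hk => if_neg (by omega)⟩
    have hform := h (fun j : ℤ => if j = 0 then Q else 0) hplf n₀
    rw [formCoeff] at hform
    rw [finsum_eq_single _ (0 : ℤ) (fun j hj => by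
      refine finsum_eq_zero_of_forall_eq_zero fun k => ?_
      rw [if_neg hj]
      simp [evalP])] at hform
    rw [finsum_eq_single _ n₀ (fun k hk => by
      rcases lt_or_gt_of_ne hk with hlt | hgt
      · have hqk : q k = 0 := by
          by_contra hne
          exact absurd (hmin k hne) (by omega)
        rw [hqk]
        simp [evalP]
      · rw [if_neg (by omega)])] at hform
    rw [if_pos (by omega)] at hform
    have h00 : (n₀ - 0 - n₀).toNat = 0 := by omega
    rw [h00] at hform
    simpa using hform
  rw [hω0] at keyInt
  -- rewrite as the integral of a nonnegative real function
  have keyInt2 : (∫ y : EuclideanSpace ℝ (Fin d),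
      ((Complex.normSq (evalP Q y) * Real.exp (-∑ ν, lam ν * (y ν)^2) : ℝ) : ℂ)) = 0 := by
    rw [← keyInt]
    congr 1
    funext y
    rw [show evalR (1 : MvPolynomial (Fin d) ℝ) y = 1 from by simp [evalR]]
    push_cast
    rw [mul_one, mul_comm ((starRingEnd ℂ) (evalP Q y)), Complex.mul_conj, hQdef]
  have hreal : (∫ y : EuclideanSpace ℝ (Fin d),
      Complex.normSq (evalP Q y) * Real.exp (-∑ ν, lam ν * (y ν)^2)) = 0 := by
    have h2 : (∫ y : EuclideanSpace ℝ (Fin d),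
        ((Complex.normSq (evalP Q y) * Real.exp (-∑ ν, lam ν * (y ν)^2) : ℝ) : ℂ))
        = (((∫ y : EuclideanSpace ℝ (Fin d),
            Complex.normSq (evalP Q y) * Real.exp (-∑ ν, lam ν * (y ν)^2)) : ℝ) : ℂ) :=
      integral_ofReal
    rw [h2] at keyInt2
    exact_mod_cast keyInt2
  -- integrability of the nonnegative integrand
  set g : EuclideanSpace ℝ (Fin d) → ℝ :=
    fun y => Complex.normSq (evalP Q y) * Real.exp (-∑ ν, lam ν * (y ν)^2) with hgdef
  have hR : ∀ y : EuclideanSpace ℝ (Fin d),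
      evalP (MvPolynomial.map (starRingEnd ℂ) Q * Q) y
        = ((Complex.normSq (evalP Q y) : ℝ) : ℂ) := by
    intro y
    rw [evalP, map_mul]
    rw [show (MvPolynomial.eval (fun i => ((y i : ℝ) : ℂ)) (MvPolynomial.map (starRingEnd ℂ) Q))
        = (starRingEnd ℂ) (MvPolynomial.eval (fun i => ((y i : ℝ) : ℂ)) Q) from
      (aux_conj_eval Q (fun i => y i)).symm]
    rw [mul_comm, Complex.mul_conj]
    rfl
  have hint : Integrable g := by
    have hC := aux_poly_gauss_integrable lam hlam (MvPolynomial.map (starRingEnd ℂ) Q * Q)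
    refine hC.re.congr (Filter.Eventually.of_forall fun y => ?_)
    show RCLike.re (evalP (MvPolynomial.map (starRingEnd ℂ) Q * Q) y *
      ((Real.exp (-∑ ν, lam ν * (y ν)^2) : ℝ) : ℂ)) = g y
    rw [hR y, ← Complex.ofReal_mul]
    simp only [RCLike.re_to_complex, Complex.ofReal_re]
    rfl
  have hnonneg : 0 ≤ g := fun y =>
    mul_nonneg (Complex.normSq_nonneg _) (Real.exp_pos _).le
  have hg0 : g =ᵐ[volume] 0 :=
    (integral_eq_zero_iff_of_nonneg hnonneg hint).mp hreal
  have hgcont : Continuous g := by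
    refine (Complex.continuous_normSq.comp (aux_continuous_evalP Q)).mul ?_
    refine Real.continuous_exp.comp (Continuous.neg ?_)
    exact continuous_finset_sum _ fun ν _ =>
      continuous_const.mul (((EuclideanSpace.proj ν).continuous).pow 2)
  have hgzero : g = 0 := (hgcont.ae_eq_iff_eq volume continuous_const).mp hg0
  have hvanish : ∀ y : EuclideanSpace ℝ (Fin d), evalP Q y = 0 := by
    intro y
    have := congrFun hgzero y
    simp only [hgdef, Pi.zero_apply] at this
    have hexp : Real.exp (-∑ ν, lam ν * (y ν)^2) ≠ 0 := (Real.exp_pos _).ne'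
    have : Complex.normSq (evalP Q y) = 0 := by
      rcases mul_eq_zero.mp this with h1 | h1
      · exact h1
      · exact absurd h1 hexp
    exact Complex.normSq_eq_zero.mp this
  have hQ0 : Q = 0 := by
    refine aux_vanish_real Q fun x => ?_
    exact hvanish ((WithLp.equiv 2 (Fin d → ℝ)).symm x)
  exact hn₀ hQ0
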